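/- Fix r ≤ −1, ρ ∈ [0,1], α > 0, c > 0, and π ∈ (0,1] with π_m → π; assume √c > 1 − √(1−ρ). Set μ_m = √(2c·log m). For each m, let Z_0, Z_1, …, Z_m be i.i.d. standard normal, let B_{m1}, …, B_{mm} be i.i.d. Bernoulli(π_m) independent of the Z's, and set p_{mi} = Φ(−μ_m·B_{mi} − √ρ·Z_0 − √(1−ρ)·Z_i). Let the rejection threshold be c_m = α·m^{1/|r| − 1} if r < −1 and c_m = α/(1 + α·log m) if r = −1. Then lim_{m→∞} Pr( ((1/m) Σ_{i=1}^m p_{mi}^r)^{1/r} ≤ c_m ) = 1. -/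

import Mathlib

open MeasureTheory ProbabilityTheory Filter

/-- Standard normal CDF `Φ`. -/
noncomputable def Phi (x : ℝ) : ℝ := ((gaussianReal 0 1 : Measure ℝ) (Set.Iic x)).toReal

/-- Bernoulli(π) law on `ℝ` (mass `π` at `1`, mass `1-π` at `0`). -/
noncomputable def bern (p : ℝ) : Measure ℝ :=
  ENNReal.ofReal p • Measure.dirac (1:ℝ) + ENNReal.ofReal (1 - p) • Measure.dirac (0:ℝ)

/-- Joint law at stage `m` of the equicorrelated Gaussian model: `m+1` i.i.d. standard
normals `Z₀,…,Z_m` together with `m` i.i.d. Bernoulli(π) signal indicators. -/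
noncomputable def model (m : ℕ) (πp : ℝ) :
    Measure ((Fin (m + 1) → ℝ) × (Fin m → ℝ)) :=
  (Measure.pi fun _ : Fin (m + 1) => (gaussianReal 0 1 : Measure ℝ)).prod
    (Measure.pi fun _ : Fin m => bern πp)

/-- The p-value `p_{mi} = Φ(-μ B_{mi} - √ρ Z₀ - √(1-ρ) Z_i)`. -/
noncomputable def pval (m : ℕ) (μs ρ : ℝ)
    (ω : (Fin (m + 1) → ℝ) × (Fin m → ℝ)) (i : Fin m) : ℝ :=
  Phi (-(μs * ω.2 i) - Real.sqrt ρ * ω.1 0 - Real.sqrt (1 - ρ) * ω.1 i.succ)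

/-- Asymptotic calibration `c_m` of the generalized-mean test of level `α` for
`r ≤ -1`: `c_m = α/(1 + α log m)` if `r = -1` and `c_m = α m^{1/|r| - 1}` if `r < -1`. -/
noncomputable def cal (r α : ℝ) (m : ℕ) : ℝ :=
  if r = -1 then α / (1 + α * Real.log m) else α * (m : ℝ) ^ (1 / |r| - 1)

section Aux

open Real Set

lemma bern_prob' {p : ℝ} (h0 : 0 ≤ p) (h1 : p ≤ 1) : IsProbabilityMeasure (bern p) := by
  constructor
  simp only [bern, Measure.add_apply, Measure.smul_apply, measure_univ, smul_eq_mul, mul_one]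
  rw [← ENNReal.ofReal_add h0 (by linarith)]
  norm_num

lemma bern_one {p : ℝ} : bern p {1} = ENNReal.ofReal p := by
  simp [bern, Measure.dirac_apply' _ (measurableSet_singleton (1:ℝ))]

lemma model_prob (m : ℕ) {p : ℝ} (h0 : 0 ≤ p) (h1 : p ≤ 1) :
    IsProbabilityMeasure (model m p) := by
  haveI := bern_prob' h0 h1
  unfold model
  infer_instance

lemma pdf_eq (x : ℝ) : gaussianPDFReal 0 1 x
    = (Real.sqrt (2*Real.pi))⁻¹ * Real.exp (-x^2/2) := by
  simp [gaussianPDFReal]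

lemma gauss_Iic_le {x : ℝ} (hx : 1 ≤ x) :
    (gaussianReal 0 1 : Measure ℝ) (Iic (-x)) ≤ ENNReal.ofReal (Real.exp (-x^2/2)) := by
  rw [gaussianReal_apply_eq_integral 0 one_ne_zero]
  apply ENNReal.ofReal_le_ofReal
  set C : ℝ := (Real.sqrt (2*Real.pi))⁻¹ * Real.exp (-x^2/2) * Real.exp x with hC
  have hsq : (1:ℝ) ≤ Real.sqrt (2*Real.pi) := by
    rw [show (1:ℝ) = Real.sqrt 1 by simp]
    exact Real.sqrt_le_sqrt (by nlinarith [Real.pi_gt_three])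
  have hptw : ∀ t ∈ Iic (-x), gaussianPDFReal 0 1 t ≤ C * Real.exp t := by
    intro t ht
    simp only [mem_Iic] at ht
    rw [pdf_eq, hC, mul_assoc, mul_assoc]
    apply mul_le_mul_of_nonneg_left _ (by positivity)
    rw [← Real.exp_add, ← Real.exp_add]
    apply Real.exp_le_exp.2
    have h1 : (0:ℝ) ≤ (-(t+x)) * (-(t-x+2)) :=
      mul_nonneg (by linarith) (by linarith)
    nlinarith
  have hint1 : IntegrableOn (gaussianPDFReal 0 1) (Iic (-x)) :=
    (integrable_gaussianPDFReal 0 1).integrableOn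
  have hint2 : IntegrableOn (fun t => C * Real.exp t) (Iic (-x)) :=
    (integrableOn_exp_Iic (-x)).const_mul C
  calc ∫ t in Iic (-x), gaussianPDFReal 0 1 t
      ≤ ∫ t in Iic (-x), C * Real.exp t :=
        setIntegral_mono_on hint1 hint2 measurableSet_Iic hptw
    _ = C * Real.exp (-x) := by rw [integral_const_mul, integral_exp_Iic]
    _ = (Real.sqrt (2*Real.pi))⁻¹ * Real.exp (-x^2/2) * (Real.exp x * Real.exp (-x)) := by ring
    _ ≤ Real.exp (-x^2/2) := by
        rw [← Real.exp_add, add_neg_cancel, Real.exp_zero, mul_one]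
        have : (Real.sqrt (2*Real.pi))⁻¹ ≤ 1 := by
          rw [inv_le_one_iff₀]; right; exact hsq
        nlinarith [Real.exp_pos (-x^2/2)]

lemma Phi_neg_le {x : ℝ} (hx : 1 ≤ x) : Phi (-x) ≤ Real.exp (-x^2/2) := by
  have h := gauss_Iic_le hx
  have := ENNReal.toReal_mono ENNReal.ofReal_ne_top h
  rwa [ENNReal.toReal_ofReal (Real.exp_nonneg _)] at this

lemma Phi_mono : Monotone Phi := fun x y h =>
  ENNReal.toReal_mono (measure_ne_top _ _) (measure_mono (Iic_subset_Iic.2 h))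

lemma gauss_Icc_ge {u v w : ℝ} (huv : u + 1 = v) (hw : ∀ t ∈ Icc u v, t^2 ≤ w^2) :
    ENNReal.ofReal ((Real.sqrt (2*Real.pi))⁻¹ * Real.exp (-w^2/2))
      ≤ (gaussianReal 0 1 : Measure ℝ) (Icc u v) := by
  rw [gaussianReal_apply_eq_integral 0 one_ne_zero]
  apply ENNReal.ofReal_le_ofReal
  set C : ℝ := (Real.sqrt (2*Real.pi))⁻¹ * Real.exp (-w^2/2) with hC
  have hptw : ∀ t ∈ Icc u v, C ≤ gaussianPDFReal 0 1 t := by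
    intro t ht
    rw [pdf_eq, hC]
    apply mul_le_mul_of_nonneg_left _ (by positivity)
    apply Real.exp_le_exp.2
    have := hw t ht
    linarith
  have hvol : (volume (Icc u v)).toReal = 1 := by
    rw [Real.volume_Icc]
    rw [show v - u = 1 by linarith]
    simp
  have hint1 : IntegrableOn (fun _ => C) (Icc u v) := by
    refine integrableOn_const ?_
    exact measure_Icc_lt_top.ne
  have hint2 : IntegrableOn (gaussianPDFReal 0 1) (Icc u v) :=
    (integrable_gaussianPDFReal 0 1).integrableOn
  calc C = (volume (Icc u v)).toReal • C := by rw [hvol, one_smul]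
    _ = ∫ _ in Icc u v, C := (setIntegral_const C).symm
    _ ≤ ∫ t in Icc u v, gaussianPDFReal 0 1 t :=
        setIntegral_mono_on hint1 hint2 measurableSet_Icc hptw

lemma gauss_Ici_ge {L : ℝ} (hL : 0 ≤ L) :
    ENNReal.ofReal ((Real.sqrt (2*Real.pi))⁻¹ * Real.exp (-(L+1)^2/2))
      ≤ (gaussianReal 0 1 : Measure ℝ) (Ici L) := by
  refine le_trans (gauss_Icc_ge rfl ?_) (measure_mono Icc_subset_Ici_self)
  intro t ht
  simp only [mem_Icc] at ht
  nlinarith [ht.1, ht.2]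

lemma Phi_pos (x : ℝ) : 0 < Phi x := by
  have h : ENNReal.ofReal ((Real.sqrt (2*Real.pi))⁻¹ * Real.exp (-(|x|+1)^2/2))
      ≤ (gaussianReal 0 1 : Measure ℝ) (Iic x) := by
    refine le_trans (gauss_Icc_ge (u := x - 1) (by ring) ?_) (measure_mono Icc_subset_Iic_self)
    intro t ht
    simp only [mem_Icc] at ht
    have h1 : x ≤ |x| := le_abs_self x
    have h2 : -x ≤ |x| := neg_le_abs x
    have := sq_le_sq' (a := t) (b := |x| + 1) (by linarith [ht.1]) (by linarith [ht.2])
    simpa [sq] using this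
  have hpos : (0:ENNReal) < (gaussianReal 0 1 : Measure ℝ) (Iic x) :=
    lt_of_lt_of_le (by positivity) h
  exact ENNReal.toReal_pos hpos.ne' (measure_ne_top _ _)

lemma cal_pos {r α : ℝ} (hα : 0 < α) {m : ℕ} (hm : 1 ≤ m) : 0 < cal r α m := by
  have hm1 : (1:ℝ) ≤ (m:ℝ) := by exact_mod_cast hm
  have hlog : 0 ≤ Real.log m := Real.log_nonneg hm1
  unfold cal
  split
  · positivity
  · have : (0:ℝ) < (m:ℝ) ^ (1 / |r| - 1) := Real.rpow_pos_of_pos (by linarith) _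
    positivity

lemma reduction {m : ℕ} (hm : 1 ≤ m) {r cm : ℝ} (hr : r ≤ -1) (hcm : 0 < cm)
    (p : Fin m → ℝ) (hp : ∀ i, 0 < p i) (j : Fin m)
    (hj : p j ≤ (m:ℝ) ^ (1/r) * cm) :
    ((1 / m : ℝ) * ∑ i : Fin m, p i ^ r) ^ (1 / r) ≤ cm := by
  have hm0 : (0:ℝ) < m := by exact_mod_cast hm
  have hr0 : r < 0 := lt_of_le_of_lt hr (by norm_num)
  have hrne : r ≠ 0 := ne_of_lt hr0
  have ht0 : (0:ℝ) < (m:ℝ) ^ (1/r) * cm :=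
    mul_pos (Real.rpow_pos_of_pos hm0 _) hcm
  have h1 : ((m:ℝ) ^ (1/r) * cm) ^ r ≤ p j ^ r :=
    Real.rpow_le_rpow_of_nonpos (hp j) hj hr0.le
  have h2 : ((m:ℝ) ^ (1/r) * cm) ^ r = (m:ℝ) * cm ^ r := by
    rw [Real.mul_rpow (Real.rpow_pos_of_pos hm0 _).le hcm.le]
    congr 1
    rw [← Real.rpow_mul hm0.le, one_div, inv_mul_cancel₀ hrne, Real.rpow_one]
  have h3 : p j ^ r ≤ ∑ i : Fin m, p i ^ r := by
    apply Finset.single_le_sum (f := fun i => p i ^ r)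
      (fun i _ => (Real.rpow_pos_of_pos (hp i) r).le) (Finset.mem_univ j)
  have h4 : cm ^ r ≤ (1 / m : ℝ) * ∑ i : Fin m, p i ^ r := by
    have h6 : (m:ℝ) * cm ^ r ≤ ∑ i : Fin m, p i ^ r := by
      rw [← h2]; exact h1.trans h3
    rw [one_div, inv_mul_eq_div, le_div_iff₀ hm0]
    linarith
  have h5 : ((1 / m : ℝ) * ∑ i : Fin m, p i ^ r) ^ (1/r) ≤ (cm ^ r) ^ (1/r) :=
    Real.rpow_le_rpow_of_nonpos (Real.rpow_pos_of_pos hcm r) h4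
      (by rw [one_div]; exact (inv_nonpos.2 hr0.le))
  rwa [← Real.rpow_mul hcm.le, mul_one_div, div_self hrne, Real.rpow_one] at h5

lemma cal_bound {r α : ℝ} (hr : r ≤ -1) (hα : 0 < α) {β : ℝ} (hβ : 1 < β) :
    ∀ᶠ m : ℕ in atTop, Real.exp (-(β * Real.log m)) ≤ (m:ℝ) ^ (1/r) * cal r α m := by
  have hδ : 0 < (β - 1)/2 := by linarith
  have key : ∀ᶠ m : ℕ in atTop, (1 + α * Real.log m) * (m:ℝ) ^ (1 - β) ≤ α := by
    have h0 : Tendsto (fun x : ℝ => (1 + α * (x ^ ((β-1)/2) / ((β-1)/2))) * x ^ (1 - β))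
        atTop (nhds 0) := by
      have hA : Tendsto (fun x : ℝ => x ^ (1 - β)) atTop (nhds 0) := by
        have := tendsto_rpow_neg_atTop (by linarith : (0:ℝ) < β - 1)
        simpa [show -(β-1) = 1 - β by ring] using this
      have hB : Tendsto (fun x : ℝ => x ^ ((β-1)/2) * x ^ (1 - β)) atTop (nhds 0) := by
        have h2 : Tendsto (fun x : ℝ => x ^ (-(β-1)/2)) atTop (nhds 0) := by
          have := tendsto_rpow_neg_atTop (by linarith : (0:ℝ) < (β-1)/2)
          simpa [show -((β-1)/2) = -(β-1)/2 by ring] using this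
        apply h2.congr'
        filter_upwards [eventually_gt_atTop (0:ℝ)] with x hx
        rw [← Real.rpow_add hx]
        ring_nf
      have := ((hA.const_mul 1).add ((hB.const_mul (α / ((β-1)/2)))))
      simp only [mul_zero, add_zero] at this
      apply this.congr
      intro x
      ring
    have hR : ∀ᶠ x : ℝ in atTop, (1 + α * Real.log x) * x ^ (1 - β) ≤ α := by
      filter_upwards [h0.eventually (eventually_le_nhds hα), eventually_ge_atTop (1:ℝ)]
        with x hx h1x
      have hlog := Real.log_le_rpow_div (by linarith : (0:ℝ) ≤ x) hδ
      have hxp : (0:ℝ) ≤ x ^ (1 - β) := Real.rpow_nonneg (by linarith) _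
      calc (1 + α * Real.log x) * x ^ (1 - β)
          ≤ (1 + α * (x ^ ((β-1)/2) / ((β-1)/2))) * x ^ (1 - β) := by
            apply mul_le_mul_of_nonneg_right _ hxp
            nlinarith [hlog, hα]
        _ ≤ α := hx
    exact tendsto_natCast_atTop_atTop.eventually hR
  filter_upwards [key, eventually_ge_atTop 1] with m hkey hm
  have hm1 : (1:ℝ) ≤ (m:ℝ) := by exact_mod_cast hm
  have hmpos : (0:ℝ) < m := by linarith
  have hlog0 : 0 ≤ Real.log m := Real.log_nonneg hm1
  have hexp : Real.exp (-(β * Real.log m)) = (m:ℝ) ^ (-β) := by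
    rw [Real.rpow_def_of_pos hmpos]
    ring_nf
  have hsplit : (m:ℝ) ^ (-β) = (m:ℝ) ^ (-1:ℝ) * (m:ℝ) ^ (1 - β) := by
    rw [← Real.rpow_add hmpos]
    congr 1
    ring
  have hden : 0 < 1 + α * Real.log m := by nlinarith
  by_cases hrc : r = -1
  · subst hrc
    rw [cal, if_pos rfl, hexp, hsplit]
    have h1 : (m:ℝ) ^ (1 - β) ≤ α / (1 + α * Real.log m) := by
      rw [le_div_iff₀ hden]
      nlinarith [hkey]
    have h2 : (0:ℝ) ≤ (m:ℝ) ^ (1/(-1):ℝ) := (Real.rpow_pos_of_pos hmpos _).le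
    have h3 : ((m:ℝ) ^ (-1:ℝ)) = (m:ℝ) ^ (1/(-1):ℝ) := by norm_num
    rw [h3]
    exact mul_le_mul_of_nonneg_left h1 h2
  · rw [cal, if_neg hrc, hexp, hsplit]
    have hrneg : r < 0 := lt_of_le_of_lt hr (by norm_num)
    have habs : |r| = -r := abs_of_neg hrneg
    have hcomb : (m:ℝ) ^ (1/r) * (α * (m:ℝ) ^ (1 / |r| - 1))
        = α * ((m:ℝ) ^ (-1:ℝ)) := by
      rw [habs, mul_comm ((m:ℝ) ^ (1/r)) _, mul_assoc, ← Real.rpow_add hmpos]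
      congr 2
      rw [one_div, one_div, inv_neg]
      ring
    rw [hcomb]
    have h1 : (m:ℝ) ^ (1 - β) ≤ α := by
      have hx : (0:ℝ) ≤ (m:ℝ) ^ (1 - β) := Real.rpow_nonneg (le_of_lt hmpos) _
      nlinarith [hkey, hx, mul_nonneg (mul_nonneg hα.le hlog0) hx]
    have h2 : (0:ℝ) ≤ (m:ℝ) ^ (-1:ℝ) := (Real.rpow_pos_of_pos hmpos _).le
    calc (m:ℝ) ^ (-1:ℝ) * (m:ℝ) ^ (1-β) = (m:ℝ) ^ (1-β) * (m:ℝ) ^ (-1:ℝ) := by ring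
      _ ≤ α * (m:ℝ) ^ (-1:ℝ) := mul_le_mul_of_nonneg_right h1 h2

lemma mp_T (m : ℕ) (p : ℝ) (h0 : 0 ≤ p) (h1 : p ≤ 1) :
    MeasurePreserving
      (fun ω : (Fin (m+1) → ℝ) × (Fin m → ℝ) =>
        ((ω.1 0, fun j : Fin m => (ω.1 j.succ, ω.2 j)) : ℝ × (Fin m → ℝ × ℝ)))
      (model m p)
      ((gaussianReal 0 1).prod
        (Measure.pi fun _ : Fin m => (gaussianReal 0 1).prod (bern p))) := by
  haveI := bern_prob' h0 h1
  have h1' : MeasurePreserving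
      (Prod.map (⇑(MeasurableEquiv.piFinSuccAbove (fun _ : Fin (m+1) => ℝ) 0))
        (id : (Fin m → ℝ) → (Fin m → ℝ)))
      (model m p)
      (((gaussianReal 0 1).prod (Measure.pi fun _ : Fin m => (gaussianReal 0 1))).prod
        (Measure.pi fun _ : Fin m => bern p)) :=
    (measurePreserving_piFinSuccAbove (fun _ : Fin (m+1) => (gaussianReal 0 1)) 0).prod
      (MeasurePreserving.id _)
  have h2' := measurePreserving_prodAssoc (gaussianReal 0 1)
    (Measure.pi fun _ : Fin m => (gaussianReal 0 1)) (Measure.pi fun _ : Fin m => bern p)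
  have h3' : MeasurePreserving
      (Prod.map (id : ℝ → ℝ) ⇑(MeasurableEquiv.arrowProdEquivProdArrow ℝ ℝ (Fin m)).symm)
      ((gaussianReal 0 1).prod
        ((Measure.pi fun _ : Fin m => (gaussianReal 0 1)).prod
          (Measure.pi fun _ : Fin m => bern p)))
      ((gaussianReal 0 1).prod
        (Measure.pi fun _ : Fin m => (gaussianReal 0 1).prod (bern p))) :=
    (MeasurePreserving.id _).prod
      (MeasurePreserving.symm _
        (measurePreserving_arrowProdEquivProdArrow ℝ ℝ (Fin m)
          (fun _ : Fin m => (gaussianReal 0 1)) (fun _ => bern p)))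
  have hcomp := (h3'.comp h2').comp h1'
  have heq : (fun ω : (Fin (m+1) → ℝ) × (Fin m → ℝ) =>
        ((ω.1 0, fun j : Fin m => (ω.1 j.succ, ω.2 j)) : ℝ × (Fin m → ℝ × ℝ)))
      = (Prod.map (id : ℝ → ℝ) ⇑(MeasurableEquiv.arrowProdEquivProdArrow ℝ ℝ (Fin m)).symm)
        ∘ ⇑MeasurableEquiv.prodAssoc
        ∘ (Prod.map (⇑(MeasurableEquiv.piFinSuccAbove (fun _ : Fin (m+1) => ℝ) 0))
            (id : (Fin m → ℝ) → (Fin m → ℝ))) := by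
    funext ω
    simp [MeasurableEquiv.prodAssoc, MeasurableEquiv.piFinSuccAbove,
      MeasurableEquiv.arrowProdEquivProdArrow, Equiv.arrowProdEquivProdArrow,
      Equiv.prodAssoc, Prod.map, Fin.insertNthEquiv, Fin.tail]
  rw [heq]
  exact hcomp

lemma A2tendsto {a : ℝ} (ha0 : 0 < a) (ha1 : a < 1) :
    Tendsto (fun m : ℕ => (m:ℝ) *
        ((Real.sqrt (2*Real.pi))⁻¹ *
          Real.exp (-(a * Real.sqrt (2*Real.log m) + 1)^2/2))) atTop atTop := by
  set b : ℝ := 1 - a^2 with hbdef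
  have hb : 0 < b := by nlinarith
  have hg : Tendsto (fun t : ℝ => t - (a * Real.sqrt (2*t) + 1)^2/2) atTop atTop := by
    apply tendsto_atTop_mono' atTop
      (show ∀ᶠ t : ℝ in atTop,
        (b/2)*t - (a^2/b + 1/2) ≤ t - (a * Real.sqrt (2*t) + 1)^2/2 from ?_) ?_
    · filter_upwards [eventually_ge_atTop (0:ℝ)] with t ht
      set s := Real.sqrt (2*t) with hs
      have hs0 : 0 ≤ s := Real.sqrt_nonneg _
      have hs2 : s^2 = 2*t := Real.sq_sqrt (by linarith)
      rw [show t = s^2/2 by linarith]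
      have hb' : b ≠ 0 := hb.ne'
      have h4 : (0:ℝ) ≤ (b*s - 2*a)^2/(4*b) := by positivity
      have hkey : s^2/2 - (a*s+1)^2/2 - (b/2*(s^2/2) - (a^2/b + 1/2))
          = (b*s-2*a)^2/(4*b) := by
        field_simp
        ring
      linarith
    · have hlin := Tendsto.const_mul_atTop (show (0:ℝ) < b/2 by positivity)
        (tendsto_id (α := ℝ) (x := atTop))
      have := tendsto_atTop_add_const_right atTop (-(a^2/b + 1/2)) hlin
      apply this.congr
      intro t
      simp [sub_eq_add_neg]
  have hmain : Tendsto (fun m : ℕ =>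
      Real.exp (Real.log m - (a * Real.sqrt (2*Real.log m) + 1)^2/2)) atTop atTop :=
    Real.tendsto_exp_atTop.comp (hg.comp (Real.tendsto_log_atTop.comp
      tendsto_natCast_atTop_atTop))
  have := Tendsto.const_mul_atTop
    (show (0:ℝ) < (Real.sqrt (2*Real.pi))⁻¹ by positivity) hmain
  apply this.congr'
  filter_upwards [eventually_ge_atTop 1] with m hm
  have hmpos : (0:ℝ) < m := by exact_mod_cast Nat.lt_of_lt_of_le Nat.zero_lt_one hm
  rw [Real.exp_sub, Real.exp_log hmpos,
    show -(a * Real.sqrt (2*Real.log m) + 1)^2/2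
      = -((a * Real.sqrt (2*Real.log m) + 1)^2/2) by ring, Real.exp_neg, div_eq_mul_inv]
  ring

end Aux

set_option maxHeartbeats 1000000

/-- for `r ≤ -1`, `ρ ∈ [0,1]`, strong signals `μ_m = √(2c log m)` with
`√c > 1 - √(1-ρ)`, and proportion `π_m → π ∈ (0,1]`, the asymptotic power of the
calibrated generalized-mean test is one: `Pr(((1/m)Σ p_{mi}^r)^{1/r} ≤ c_m) → 1`. -/
theorem stmt_16 (r ρ α c : ℝ) (hr : r ≤ -1) (hρ : ρ ∈ Set.Icc (0:ℝ) 1) (hα : 0 < α)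
    (hc : 0 < c) (hdet : 1 - Real.sqrt (1 - ρ) < Real.sqrt c)
    (πm : ℕ → ℝ) (hπm : ∀ m, πm m ∈ Set.Icc (0:ℝ) 1)
    (π : ℝ) (hπ : π ∈ Set.Ioc (0:ℝ) 1) (hπlim : Tendsto πm atTop (nhds π)) :
    Tendsto (fun m : ℕ =>
        model m (πm m) {ω | ((1 / m : ℝ) * ∑ i : Fin m,
            pval m (Real.sqrt (2 * c * Real.log m)) ρ ω i ^ r) ^ (1 / r) ≤ cal r α m})
      atTop (nhds (1 : ENNReal)) := by
  obtain ⟨hρ0, hρ1⟩ := hρ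
  obtain ⟨hπ0, hπ1⟩ := hπ
  have hs1 : 0 ≤ Real.sqrt (1 - ρ) := Real.sqrt_nonneg _
  have hs1' : Real.sqrt (1 - ρ) ≤ 1 := Real.sqrt_le_one.2 (by linarith)
  have hsρ : Real.sqrt ρ ≤ 1 := Real.sqrt_le_one.2 hρ1
  have hsρ0 : 0 ≤ Real.sqrt ρ := Real.sqrt_nonneg _
  have hsc : 0 ≤ Real.sqrt c := Real.sqrt_nonneg _
  set t0 : ℝ := Real.sqrt c + Real.sqrt (1-ρ) - 1 with ht0
  have ht0pos : 0 < t0 := by rw [ht0]; linarith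
  set a : ℝ := max (1/2 : ℝ) (1 - t0/2) with ha
  have ha0 : 0 < a := lt_of_lt_of_le (by norm_num) (le_max_left _ _)
  have ha1 : a < 1 := max_lt (by norm_num) (by linarith)
  have hσ : 1 < Real.sqrt c + a * Real.sqrt (1-ρ) := by
    rcases le_or_gt (1 - t0/2) (1/2 : ℝ) with hcase | hcase
    · have haeq : a = 1/2 := by rw [ha, max_eq_left hcase]
      rw [haeq]
      nlinarith [hs1', hs1]
    · have haeq : a = 1 - t0/2 := by rw [ha, max_eq_right hcase.le]
      rw [haeq]
      nlinarith [hs1', hs1, mul_nonneg ht0pos.le (by linarith : (0:ℝ) ≤ 1 - Real.sqrt (1-ρ))]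
  set δ : ℝ := (Real.sqrt c + a * Real.sqrt (1-ρ) - 1)/2 with hδdef
  have hδ : 0 < δ := by rw [hδdef]; linarith
  have hσδ : Real.sqrt c + a * Real.sqrt (1-ρ) = 1 + 2*δ := by rw [hδdef]; ring
  have hβ : 1 < (1+δ)^2 := by nlinarith
  have hE4 := cal_bound hr hα hβ
  rw [ENNReal.tendsto_nhds (by norm_num : (1:ENNReal) ≠ ⊤)]
  intro ε hε
  simp only [Set.mem_Icc]
  by_cases hε1 : (1:ENNReal) ≤ ε
  · filter_upwards with m
    haveI := model_prob m (hπm m).1 (hπm m).2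
    refine ⟨?_, le_trans prob_le_one le_self_add⟩
    simp [tsub_eq_zero_of_le hε1]
  push_neg at hε1
  have hεne : ε ≠ ⊤ := (hε1.trans (by norm_num)).ne
  have hε2ne : ε/2 ≠ ⊤ := (ENNReal.div_lt_top hεne (by norm_num)).ne
  have hε2pos : (0:ENNReal) < ε/2 := ENNReal.div_pos hε.ne' (by norm_num)
  set εr : ℝ := min ((ε/2).toReal) 2⁻¹ with hεrdef
  have hεrpos : 0 < εr :=
    lt_min (ENNReal.toReal_pos hε2pos.ne' hε2ne) (by norm_num)
  have hεrle : ENNReal.ofReal εr ≤ ε/2 := by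
    calc ENNReal.ofReal εr ≤ ENNReal.ofReal ((ε/2).toReal) :=
          ENNReal.ofReal_le_ofReal (min_le_left _ _)
      _ = ε/2 := ENNReal.ofReal_toReal hε2ne
  set K : ℝ := Real.sqrt (2*|Real.log (1/εr)|) + 1 with hKdef
  have hK1 : 1 ≤ K := le_add_of_nonneg_left (Real.sqrt_nonneg _)
  have hK0 : 0 ≤ K := by linarith
  have hKexp : Real.exp (-K^2/2) ≤ εr := by
    have hsq : 2*|Real.log (1/εr)| ≤ K^2 := by
      rw [hKdef]
      nlinarith [Real.sq_sqrt (show (0:ℝ) ≤ 2*|Real.log (1/εr)| by positivity),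
        Real.sqrt_nonneg (2*|Real.log (1/εr)|)]
    have h1 : Real.log (1/εr) ≤ K^2/2 :=
      le_trans (le_abs_self _) (by linarith)
    have h2 : -K^2/2 ≤ -Real.log (1/εr) := by linarith
    calc Real.exp (-K^2/2) ≤ Real.exp (-Real.log (1/εr)) := Real.exp_le_exp.2 h2
      _ = εr := by rw [one_div, Real.log_inv, neg_neg, Real.exp_log hεrpos]
  have hlogtend : Tendsto (fun m:ℕ => Real.log m) atTop atTop :=
    Real.tendsto_log_atTop.comp tendsto_natCast_atTop_atTop
  have hE1 : ∀ᶠ m:ℕ in atTop, 1 ≤ m := eventually_ge_atTop 1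
  have hE2 : ∀ᶠ m:ℕ in atTop, K ≤ δ * Real.sqrt (2*Real.log m) := by
    filter_upwards [hlogtend.eventually_ge_atTop ((K/δ)^2/2)] with m hm
    have h1 : (K/δ)^2 ≤ 2*Real.log m := by linarith
    have h2 : K/δ ≤ Real.sqrt (2*Real.log m) := by
      rw [show K/δ = Real.sqrt ((K/δ)^2) from (Real.sqrt_sq (by positivity)).symm]
      exact Real.sqrt_le_sqrt h1
    calc K = δ * (K/δ) := by field_simp
      _ ≤ δ * Real.sqrt (2*Real.log m) := mul_le_mul_of_nonneg_left h2 hδ.le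
  have hE3 : ∀ᶠ m:ℕ in atTop, 1 ≤ (1+δ) * Real.sqrt (2*Real.log m) := by
    filter_upwards [hlogtend.eventually_ge_atTop (1/2 : ℝ)] with m hm
    have h1 : (1:ℝ) ≤ Real.sqrt (2*Real.log m) := by
      rw [show (1:ℝ) = Real.sqrt 1 by simp]
      exact Real.sqrt_le_sqrt (by linarith)
    have h2 : (1:ℝ)*1 ≤ (1+δ) * Real.sqrt (2*Real.log m) :=
      mul_le_mul (by linarith) h1 (by norm_num) (by linarith)
    linarith
  have hE5 : ∀ᶠ m:ℕ in atTop, π/2 ≤ πm m :=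
    hπlim.eventually (eventually_ge_nhds (by linarith : π/2 < π))
  have htend2 : Tendsto (fun m:ℕ => (π/2) * ((m:ℝ) * ((Real.sqrt (2*Real.pi))⁻¹ *
      Real.exp (-(a*Real.sqrt (2*Real.log m) + 1)^2/2)))) atTop atTop :=
    Tendsto.const_mul_atTop (by linarith) (A2tendsto ha0 ha1)
  have hE6 : ∀ᶠ m:ℕ in atTop,
      (1 - ((gaussianReal 0 1 : Measure ℝ)
          (Set.Ici (a*Real.sqrt (2*Real.log m)))).toReal * πm m)^m ≤ εr := by
    filter_upwards [htend2.eventually_ge_atTop (-Real.log εr), hE5, hE1] with m hm hm5 hm1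
    set τ : ℝ := ((gaussianReal 0 1 : Measure ℝ)
      (Set.Ici (a*Real.sqrt (2*Real.log m)))).toReal with hτdef
    have hτ0 : 0 ≤ τ := ENNReal.toReal_nonneg
    have hτ1 : τ ≤ 1 := by
      rw [hτdef]
      have := ENNReal.toReal_mono (@ENNReal.one_ne_top) (prob_le_one
        (μ := (gaussianReal 0 1 : Measure ℝ))
        (s := Set.Ici (a*Real.sqrt (2*Real.log m))))
      simpa using this
    set q : ℝ := τ * πm m with hq
    have hq0 : 0 ≤ q := mul_nonneg hτ0 (hπm m).1
    have hq1 : q ≤ 1 := by nlinarith [hτ1, (hπm m).2, hτ0, (hπm m).1]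
    have hmcast : (0:ℝ) ≤ m := Nat.cast_nonneg m
    have hLnn : 0 ≤ a * Real.sqrt (2*Real.log m) :=
      mul_nonneg ha0.le (Real.sqrt_nonneg _)
    have hφτ : (Real.sqrt (2*Real.pi))⁻¹ *
        Real.exp (-(a*Real.sqrt (2*Real.log m)+1)^2/2) ≤ τ := by
      have hg := gauss_Ici_ge hLnn
      have := ENNReal.toReal_mono (measure_ne_top _ _) hg
      rwa [ENNReal.toReal_ofReal (by positivity)] at this
    have hmq : -Real.log εr ≤ (m:ℝ) * q := by
      refine le_trans hm ?_
      rw [hq]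
      calc (π/2) * ((m:ℝ) * ((Real.sqrt (2*Real.pi))⁻¹ *
            Real.exp (-(a*Real.sqrt (2*Real.log m) + 1)^2/2)))
          = (m:ℝ) * (((Real.sqrt (2*Real.pi))⁻¹ *
            Real.exp (-(a*Real.sqrt (2*Real.log m) + 1)^2/2)) * (π/2)) := by ring
        _ ≤ (m:ℝ) * (τ * πm m) :=
            mul_le_mul_of_nonneg_left
              (mul_le_mul hφτ hm5 (by linarith) hτ0) hmcast
    calc (1 - q)^m ≤ (Real.exp (-q))^m :=
          pow_le_pow_left₀ (by linarith)
            (by nlinarith [Real.add_one_le_exp (-q)]) m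
      _ = Real.exp ((m:ℕ) * (-q)) := (Real.exp_nat_mul _ m).symm
      _ ≤ Real.exp (Real.log εr) := Real.exp_le_exp.2 (by push_cast; nlinarith [hmq])
      _ = εr := Real.exp_log hεrpos
  filter_upwards [hE1, hE2, hE3, hE4, hE5, hE6] with m hm1 hm2 hm3 hm4 hm5 hm6
  haveI hbp : IsProbabilityMeasure (bern (πm m)) := bern_prob' (hπm m).1 (hπm m).2
  haveI hmp : IsProbabilityMeasure (model m (πm m)) := model_prob m (hπm m).1 (hπm m).2
  have hm1' : (1:ℝ) ≤ (m:ℝ) := by exact_mod_cast hm1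
  have hlog0 : (0:ℝ) ≤ Real.log m := Real.log_nonneg hm1'
  refine ⟨?_, le_trans prob_le_one le_self_add⟩
  rw [tsub_le_iff_right]
  set L : ℝ := a * Real.sqrt (2*Real.log m) with hLdef
  set T : (Fin (m+1) → ℝ) × (Fin m → ℝ) → ℝ × (Fin m → ℝ × ℝ) :=
    fun ω => ((ω.1 0, fun j : Fin m => (ω.1 j.succ, ω.2 j)) : ℝ × (Fin m → ℝ × ℝ)) with hTdef
  have hT : MeasurePreserving T (model m (πm m))
      ((gaussianReal 0 1).prod
        (Measure.pi fun _ : Fin m => (gaussianReal 0 1).prod (bern (πm m)))) :=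
    mp_T m (πm m) (hπm m).1 (hπm m).2
  set S1 : Set (ℝ × (Fin m → ℝ × ℝ)) := (Set.Iio (-K)) ×ˢ (Set.univ) with hS1def
  set C : Set (ℝ × ℝ) := (Set.Ici L ×ˢ ({1} : Set ℝ))ᶜ with hCdef
  set S2 : Set (ℝ × (Fin m → ℝ × ℝ)) :=
    (Set.univ : Set ℝ) ×ˢ (Set.univ.pi fun _ : Fin m => C) with hS2def
  have hMS1 : MeasurableSet S1 := measurableSet_Iio.prod MeasurableSet.univ
  have hMC : MeasurableSet C := (measurableSet_Ici.prod (measurableSet_singleton _)).compl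
  have hMS2 : MeasurableSet S2 :=
    MeasurableSet.univ.prod (MeasurableSet.univ_pi fun _ => hMC)
  have hcover : (Set.univ : Set ((Fin (m+1) → ℝ) × (Fin m → ℝ))) ⊆
      {ω | ((1 / m : ℝ) * ∑ i : Fin m,
          pval m (Real.sqrt (2 * c * Real.log m)) ρ ω i ^ r) ^ (1 / r) ≤ cal r α m}
        ∪ ((T ⁻¹' S1) ∪ (T ⁻¹' S2)) := by
    intro ω _
    by_cases hω1 : ω ∈ T ⁻¹' S1
    · exact Or.inr (Or.inl hω1)
    by_cases hω2 : ω ∈ T ⁻¹' S2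
    · exact Or.inr (Or.inr hω2)
    left
    have hz0 : -K ≤ ω.1 0 := by
      simp only [hTdef, hS1def, Set.mem_preimage, Set.mem_prod, Set.mem_Iio,
        Set.mem_univ, and_true] at hω1
      linarith [not_lt.1 hω1]
    obtain ⟨j, hj1, hj2⟩ : ∃ j : Fin m, L ≤ ω.1 j.succ ∧ ω.2 j = 1 := by
      simp only [hTdef, hS2def, hCdef, Set.mem_preimage, Set.mem_prod, Set.mem_univ,
        true_and, Set.mem_pi, Set.mem_compl_iff, Set.mem_Ici,
        Set.mem_singleton_iff, not_and, not_forall, not_not] at hω2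
      obtain ⟨j, hj⟩ := hω2
      exact ⟨j, hj.2.1, hj.2.2⟩
    rw [Set.mem_setOf_eq]
    refine reduction hm1 hr (cal_pos hα hm1) _ (fun i => Phi_pos _) j ?_
    have harg : -(Real.sqrt (2*c*Real.log m) * ω.2 j) - Real.sqrt ρ * ω.1 0
        - Real.sqrt (1-ρ) * ω.1 j.succ ≤ -((1+δ) * Real.sqrt (2*Real.log m)) := by
      rw [hj2, mul_one]
      have hμ : Real.sqrt (2*c*Real.log m)
          = Real.sqrt c * Real.sqrt (2*Real.log m) := by
        rw [show 2*c*Real.log m = c * (2*Real.log m) by ring, Real.sqrt_mul hc.le]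
      have h2' : -(Real.sqrt ρ * ω.1 0) ≤ K := by
        nlinarith [mul_le_mul_of_nonneg_left hz0 hsρ0, hsρ, hK0, hsρ0]
      have h3 : Real.sqrt (1-ρ) * L ≤ Real.sqrt (1-ρ) * ω.1 j.succ :=
        mul_le_mul_of_nonneg_left hj1 hs1
      have h6 : Real.sqrt c * Real.sqrt (2*Real.log m) + Real.sqrt (1-ρ) * L
          = Real.sqrt (2*Real.log m) + 2*(δ * Real.sqrt (2*Real.log m)) := by
        calc Real.sqrt c * Real.sqrt (2*Real.log m) + Real.sqrt (1-ρ) * L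
            = (Real.sqrt c + a * Real.sqrt (1-ρ)) * Real.sqrt (2*Real.log m) := by
              rw [hLdef]; ring
          _ = (1+2*δ) * Real.sqrt (2*Real.log m) := by rw [hσδ]
          _ = Real.sqrt (2*Real.log m) + 2*(δ * Real.sqrt (2*Real.log m)) := by ring
      have h7 : (1+δ) * Real.sqrt (2*Real.log m)
          = Real.sqrt (2*Real.log m) + δ * Real.sqrt (2*Real.log m) := by ring
      linarith [hμ, h2', h3, h6, h7, hm2]
    calc pval m (Real.sqrt (2*c*Real.log m)) ρ ω j
        ≤ Phi (-((1+δ) * Real.sqrt (2*Real.log m))) := Phi_mono harg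
      _ ≤ Real.exp (-((1+δ)*Real.sqrt (2*Real.log m))^2/2) := Phi_neg_le hm3
      _ = Real.exp (-(((1+δ)^2) * Real.log m)) := by
          congr 1
          rw [mul_pow, Real.sq_sqrt (by linarith : (0:ℝ) ≤ 2*Real.log m)]
          ring
      _ ≤ (m:ℝ) ^ (1/r) * cal r α m := hm4
  have hpre1 : model m (πm m) (T ⁻¹' S1) ≤ ε/2 := by
    rw [hT.measure_preimage hMS1.nullMeasurableSet]
    rw [hS1def, Measure.prod_prod, measure_univ, mul_one]
    calc (gaussianReal 0 1 : Measure ℝ) (Set.Iio (-K))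
        ≤ (gaussianReal 0 1 : Measure ℝ) (Set.Iic (-K)) :=
          measure_mono Set.Iio_subset_Iic_self
      _ ≤ ENNReal.ofReal (Real.exp (-K^2/2)) := gauss_Iic_le hK1
      _ ≤ ENNReal.ofReal εr := ENNReal.ofReal_le_ofReal hKexp
      _ ≤ ε/2 := hεrle
  have hq0' : 0 ≤ ((gaussianReal 0 1 : Measure ℝ) (Set.Ici L)).toReal * πm m :=
    mul_nonneg ENNReal.toReal_nonneg (hπm m).1
  have hq1' : ((gaussianReal 0 1 : Measure ℝ) (Set.Ici L)).toReal * πm m ≤ 1 := by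
    have hτ1 : ((gaussianReal 0 1 : Measure ℝ) (Set.Ici L)).toReal ≤ 1 := by
      have := ENNReal.toReal_mono (@ENNReal.one_ne_top)
        (prob_le_one (μ := (gaussianReal 0 1 : Measure ℝ)) (s := Set.Ici L))
      simpa using this
    nlinarith [(hπm m).2, (hπm m).1, ENNReal.toReal_nonneg
      (a := (gaussianReal 0 1 : Measure ℝ) (Set.Ici L))]
  have hpre2 : model m (πm m) (T ⁻¹' S2) ≤ ε/2 := by
    rw [hT.measure_preimage hMS2.nullMeasurableSet]
    rw [hS2def, Measure.prod_prod, measure_univ, one_mul, Measure.pi_pi]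
    have hCval : ((gaussianReal 0 1).prod (bern (πm m))) C
        = ENNReal.ofReal (1 - ((gaussianReal 0 1 : Measure ℝ) (Set.Ici L)).toReal * πm m) := by
      rw [hCdef, measure_compl (measurableSet_Ici.prod (measurableSet_singleton _))
        (measure_ne_top _ _), measure_univ, Measure.prod_prod, bern_one]
      have hmul : (gaussianReal 0 1 : Measure ℝ) (Set.Ici L) * ENNReal.ofReal (πm m)
          = ENNReal.ofReal (((gaussianReal 0 1 : Measure ℝ) (Set.Ici L)).toReal * πm m) := by
        rw [ENNReal.ofReal_mul ENNReal.toReal_nonneg,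
          ENNReal.ofReal_toReal (measure_ne_top _ _)]
      rw [hmul, ← ENNReal.ofReal_one, ← ENNReal.ofReal_sub _ hq0']
    rw [hCval, Finset.prod_const, Finset.card_univ, Fintype.card_fin,
      ← ENNReal.ofReal_pow (by linarith)]
    calc ENNReal.ofReal ((1 - ((gaussianReal 0 1 : Measure ℝ) (Set.Ici L)).toReal * πm m)^m)
        ≤ ENNReal.ofReal εr := ENNReal.ofReal_le_ofReal hm6
      _ ≤ ε/2 := hεrle
  calc (1:ENNReal) = model m (πm m) Set.univ := measure_univ.symm
    _ ≤ model m (πm m) ({ω | ((1 / m : ℝ) * ∑ i : Fin m,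
          pval m (Real.sqrt (2 * c * Real.log m)) ρ ω i ^ r) ^ (1 / r) ≤ cal r α m}
        ∪ ((T ⁻¹' S1) ∪ (T ⁻¹' S2))) := measure_mono hcover
    _ ≤ model m (πm m) {ω | ((1 / m : ℝ) * ∑ i : Fin m,
          pval m (Real.sqrt (2 * c * Real.log m)) ρ ω i ^ r) ^ (1 / r) ≤ cal r α m}
        + model m (πm m) ((T ⁻¹' S1) ∪ (T ⁻¹' S2)) := measure_union_le _ _
    _ ≤ model m (πm m) {ω | ((1 / m : ℝ) * ∑ i : Fin m,
          pval m (Real.sqrt (2 * c * Real.log m)) ρ ω i ^ r) ^ (1 / r) ≤ cal r α m}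
        + (model m (πm m) (T ⁻¹' S1) + model m (πm m) (T ⁻¹' S2)) :=
          add_le_add_right (measure_union_le _ _) _
    _ ≤ model m (πm m) {ω | ((1 / m : ℝ) * ∑ i : Fin m,
          pval m (Real.sqrt (2 * c * Real.log m)) ρ ω i ^ r) ^ (1 / r) ≤ cal r α m}
        + (ε/2 + ε/2) := add_le_add_right (add_le_add hpre1 hpre2) _
    _ = model m (πm m) {ω | ((1 / m : ℝ) * ∑ i : Fin m,
          pval m (Real.sqrt (2 * c * Real.log m)) ρ ω i ^ r) ^ (1 / r) ≤ cal r α m}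
        + ε := by rw [ENNReal.add_halves]
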